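/- Key inequality for the exact penalty theorem: Assume assoc_S(A) > 0 for every nonempty A ⊆ V'. Let A_0 ⊆ V' be feasible and let θ > 0 satisfy pen(A) ≥ θ for every nonempty infeasible A ⊆ V'. If γ > (vol_d(V)/θ)·(vol_g(A_0) + ν_S)/assoc_S(A_0), where vol_d(V) = ∑_{i∈V} d(i), then for every nonempty infeasible A ⊆ V' one has (vol_g(A) + ν_S + γ·pen(A))/assoc_S(A) > (vol_g(A_0) + ν_S)/assoc_S(A_0). -/
import Mathlib


open Finset

/-- `Vp S` is the set of experts `V' = V \ S`, as a subtype. -/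
abbrev Vp {V : Type*} [Fintype V] [DecidableEq V] (S : Finset V) := {x : V // x ∉ S}

/-- **Key inequality for the exact penalty theorem.** If
`γ > (vol_d(V)/θ)·(vol_g(A_0) + ν_S)/assoc_S(A_0)`, then for every nonempty infeasible
`A ⊆ V'` one has
`(vol_g(A) + ν_S + γ·pen(A))/assoc_S(A) > (vol_g(A_0) + ν_S)/assoc_S(A_0)`. -/
theorem exact_penalty_key_inequality
    {V : Type*} [Fintype V] [DecidableEq V] (hV : Nonempty V)
    (w : V → V → ℝ) (hw_symm : ∀ i j, w i j = w j i) (hw_nonneg : ∀ i j, 0 ≤ w i j)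
    (g : V → ℝ) (hg : ∀ i, 0 < g i)
    (S : Finset V) (hVp : Nonempty (Vp S))
    (p : ℕ) (hp : 1 ≤ p)
    (M : Fin p → Vp S → ℝ) (hM : ∀ j i, 0 ≤ M j i) (k l : Fin p → ℝ)
    (dist : Vp S → Vp S → ℝ) (hdist_symm : ∀ u v, dist u v = dist v u)
    (hdist_nonneg : ∀ u v, 0 ≤ dist u v) (d0 : ℝ) (hd0 : 0 ≤ d0)
    -- the degree function d, the restricted degrees d^S, and the constants μ_S, ν_S
    (deg : V → ℝ) (hdeg : deg = fun i => ∑ j, w i j)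
    (degS : Vp S → ℝ) (hdegS : degS = fun i => ∑ j ∈ S, w i.1 j)
    (muS nuS : ℝ) (hmuS : muS = ∑ i ∈ S, ∑ j ∈ S, w i j) (hnuS : nuS = ∑ i ∈ S, g i)
    -- assoc_S(A) = vol_d(A) − cut(A, V'∖A) + vol_{d^S}(A) + μ_S·unit(A)
    (assocS : Finset (Vp S) → ℝ)
    (hassocS : assocS = fun A => (∑ i ∈ A, deg i.1) - (∑ i ∈ A, ∑ j ∈ Aᶜ, w i.1 j.1)
        + (∑ i ∈ A, degS i) + muS * (if A = ∅ then 0 else 1))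
    -- the penalty function
    (pen : Finset (Vp S) → ℝ)
    (hpen : pen = fun A => if A = ∅ then 0 else
        (∑ j, max 0 ((∑ i ∈ A, M j i) - l j)) + (∑ j, max 0 (k j - ∑ i ∈ A, M j i))
        + ∑ u ∈ A, ∑ v ∈ A, max 0 (dist u v - d0))
    -- feasibility
    (Feasible : Finset (Vp S) → Prop)
    (hFeas : Feasible = fun A => A.Nonempty
        ∧ (∀ j, k j ≤ (∑ i ∈ A, M j i) ∧ (∑ i ∈ A, M j i) ≤ l j)
        ∧ ∀ u ∈ A, ∀ v ∈ A, dist u v ≤ d0)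
    -- assumptions of the theorem
    (hassoc_pos : ∀ A : Finset (Vp S), A.Nonempty → 0 < assocS A)
    (A0 : Finset (Vp S)) (hA0 : Feasible A0)
    (θ : ℝ) (hθ : 0 < θ)
    (hθpen : ∀ A : Finset (Vp S), A.Nonempty → ¬ Feasible A → θ ≤ pen A)
    (γ : ℝ)
    (hγ : ((∑ i, deg i) / θ) * (((∑ i ∈ A0, g i.1) + nuS) / assocS A0) < γ) :
    ∀ A : Finset (Vp S), A.Nonempty → ¬ Feasible A →
      ((∑ i ∈ A0, g i.1) + nuS) / assocS A0
        < ((∑ i ∈ A, g i.1) + nuS + γ * pen A) / assocS A := by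

  intro A hAne hAinf
  have hnuS_nn : 0 ≤ nuS := by
    rw [hnuS]; exact Finset.sum_nonneg fun i _ => (hg i).le
  have hA0ne : A0.Nonempty := by rw [hFeas] at hA0; exact hA0.1
  have hA0pos : 0 < assocS A0 := hassoc_pos A0 hA0ne
  have hnum0 : 0 < (∑ i ∈ A0, g i.1) + nuS :=
    add_pos_of_pos_of_nonneg (Finset.sum_pos (fun i _ => hg i.1) hA0ne) hnuS_nn
  set c := ((∑ i ∈ A0, g i.1) + nuS) / assocS A0 with hc
  have hcpos : 0 < c := div_pos hnum0 hA0pos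
  -- splitting sums over V into V' and S
  have hsplit : ∀ f : V → ℝ, ∑ i, f i = (∑ i : Vp S, f i.1) + ∑ i ∈ S, f i := by
    intro f
    rw [← Finset.sum_compl_add_sum S f]
    congr 1
    exact Finset.sum_subtype Sᶜ (fun x => Finset.mem_compl) f
  have hdeg' : ∀ i : Vp S, deg i.1 = (∑ j : Vp S, w i.1 j.1) + degS i := by
    intro i; rw [hdeg, hdegS]; exact hsplit (w i.1)
  have hdegSnn : ∀ i : Vp S, 0 ≤ degS i := by
    intro i; rw [hdegS]; exact Finset.sum_nonneg fun j _ => hw_nonneg _ _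
  have hD' : (∑ i ∈ S, ∑ j : Vp S, w i j.1) = ∑ i : Vp S, degS i := by
    rw [Finset.sum_comm]
    refine Finset.sum_congr rfl fun j _ => ?_
    rw [hdegS]
    exact Finset.sum_congr rfl fun i _ => hw_symm i j.1
  have hvolD : (∑ i, deg i) = (∑ i : Vp S, ∑ j : Vp S, w i.1 j.1)
      + (∑ i : Vp S, degS i) + (∑ i : Vp S, degS i) + muS := by
    rw [hsplit deg]
    have h1 : (∑ i : Vp S, deg i.1)
        = (∑ i : Vp S, ∑ j : Vp S, w i.1 j.1) + (∑ i : Vp S, degS i) := by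
      rw [← Finset.sum_add_distrib]
      exact Finset.sum_congr rfl fun i _ => hdeg' i
    have h2 : (∑ i ∈ S, deg i) = (∑ i ∈ S, ∑ j : Vp S, w i j.1) + muS := by
      rw [hmuS, ← Finset.sum_add_distrib]
      refine Finset.sum_congr rfl fun i _ => ?_
      rw [hdeg]; exact hsplit (w i)
    rw [h1, h2, hD']; ring
  -- expand assocS A
  have hAempty : A ≠ ∅ := hAne.ne_empty
  have hassocA : assocS A = (∑ i ∈ A, ∑ j ∈ A, w i.1 j.1)
      + (∑ i ∈ A, degS i) + (∑ i ∈ A, degS i) + muS := by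
    rw [hassocS]
    simp only [if_neg hAempty, mul_one]
    have hA : (∑ i ∈ A, deg i.1)
        = ∑ i ∈ A, ((∑ j ∈ A, w i.1 j.1) + (∑ j ∈ Aᶜ, w i.1 j.1) + degS i) := by
      refine Finset.sum_congr rfl fun i _ => ?_
      rw [hdeg' i, ← Finset.sum_add_sum_compl A (fun j => w i.1 j.1)]
    rw [hA]
    simp only [Finset.sum_add_distrib]
    ring
  -- assocS A ≤ total volume
  have hbound : assocS A ≤ ∑ i, deg i := by
    rw [hassocA, hvolD]
    have h1 : (∑ i ∈ A, ∑ j ∈ A, w i.1 j.1) ≤ ∑ i : Vp S, ∑ j : Vp S, w i.1 j.1 := by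
      calc (∑ i ∈ A, ∑ j ∈ A, w i.1 j.1)
          ≤ ∑ i ∈ A, ∑ j : Vp S, w i.1 j.1 :=
            Finset.sum_le_sum fun i _ =>
              Finset.sum_le_sum_of_subset_of_nonneg (Finset.subset_univ A)
                (fun j _ _ => hw_nonneg _ _)
        _ ≤ ∑ i : Vp S, ∑ j : Vp S, w i.1 j.1 :=
            Finset.sum_le_sum_of_subset_of_nonneg (Finset.subset_univ A)
              (fun i _ _ => Finset.sum_nonneg fun j _ => hw_nonneg _ _)
    have h2 : (∑ i ∈ A, degS i) ≤ ∑ i : Vp S, degS i :=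
      Finset.sum_le_sum_of_subset_of_nonneg (Finset.subset_univ A)
        (fun i _ _ => hdegSnn i)
    linarith
  have hvolnn : 0 ≤ ∑ i, deg i := by
    rw [hdeg]; exact Finset.sum_nonneg fun i _ => Finset.sum_nonneg fun j _ => hw_nonneg _ _
  have hγnn : 0 ≤ γ :=
    le_of_lt (lt_of_le_of_lt (mul_nonneg (div_nonneg hvolnn hθ.le) hcpos.le) hγ)
  have hpenA : θ ≤ pen A := hθpen A hAne hAinf
  have hApos : 0 < assocS A := hassoc_pos A hAne
  rw [lt_div_iff₀ hApos]
  have key : (∑ i, deg i) * c < γ * θ := by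
    have h := hγ
    rw [div_mul_eq_mul_div, div_lt_iff₀ hθ] at h
    exact h
  have hgAnn : 0 ≤ ∑ i ∈ A, g i.1 := Finset.sum_nonneg fun i _ => (hg i.1).le
  calc c * assocS A ≤ c * (∑ i, deg i) := mul_le_mul_of_nonneg_left hbound hcpos.le
    _ = (∑ i, deg i) * c := mul_comm _ _
    _ < γ * θ := key
    _ ≤ γ * pen A := mul_le_mul_of_nonneg_left hpenA hγnn
    _ ≤ (∑ i ∈ A, g i.1) + nuS + γ * pen A := by linarith
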